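/- Multiple-addition product formula: with F as above and transformed functions f^{(M)} = f − Σ_{j,k=1}^M φ_j (F^{-1})_{jk} ⟨φ_k,f⟩, for any continuous f,g with appropriate integrability near x1, f^{(M)}(x) g^{(M)}(x) = f(x)g(x) − d/dx [ Σ_{k,m=1}^M ⟨φ_k,f⟩(x) (F^{-1}(x))_{km} ⟨φ_m,g⟩(x) ]. -/

import Mathlib

open Set MeasureTheory intervalIntegral Matrix

set_option maxHeartbeats 1000000

/-- The Abraham–Moses matrix `F(x)` with entries `δ_{jk} + ∫_{x1}^x φ_j φ_k`. -/
noncomputable def amF (x1 : ℝ) {M : ℕ} (φ : Fin M → ℝ → ℝ) (x : ℝ) :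
    Matrix (Fin M) (Fin M) ℝ :=
  Matrix.of fun j k => (if j = k then (1 : ℝ) else 0) + ∫ t in x1..x, φ j t * φ k t

/-- The `M`-fold Abraham–Moses transform `f^{(M)} = f − Σ_{j,k} φ_j (F⁻¹)_{jk} ⟨φ_k,f⟩`. -/
noncomputable def amTransform (x1 : ℝ) {M : ℕ} (φ : Fin M → ℝ → ℝ)
    (f : ℝ → ℝ) (x : ℝ) : ℝ :=
  f x - ∑ j : Fin M, ∑ k : Fin M,
    φ j x * (amF x1 φ x)⁻¹ j k * ∫ t in x1..x, φ k t * f t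

/-! ### Auxiliary lemmas -/

lemma am_ftc_helper {x1 x2 x : ℝ} (h : ℝ → ℝ) (hc : ContinuousOn h (Ioo x1 x2))
    (hi : IntegrableOn h (Ioo x1 x)) (hx : x ∈ Ioo x1 x2) :
    HasDerivAt (fun y => ∫ t in x1..y, h t) (h x) x := by
  refine intervalIntegral.integral_hasDerivAt_right
    ((intervalIntegrable_iff_integrableOn_Ioo_of_le hx.1.le).2 hi) ?_ ?_
  · exact ⟨Ioo x1 x2, isOpen_Ioo.mem_nhds hx, hc.aestronglyMeasurable measurableSet_Ioo⟩
  · exact hc.continuousAt (isOpen_Ioo.mem_nhds hx)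

lemma am_ii_sum {ι : Type*} (s : Finset ι) {f : ι → ℝ → ℝ} {a b : ℝ}
    (h : ∀ i ∈ s, IntervalIntegrable (f i) volume a b) :
    IntervalIntegrable (fun t => ∑ i ∈ s, f i t) volume a b := by
  have e : (fun t => ∑ i ∈ s, f i t) = (∑ i ∈ s, f i) := by
    funext t; simp
  rw [e]; exact IntervalIntegrable.sum s h

lemma amF_det_ne {x1 y : ℝ} {M : ℕ} (φ : Fin M → ℝ → ℝ) (hy : x1 ≤ y)
    (hint : ∀ j k, IntervalIntegrable (fun t => φ j t * φ k t) volume x1 y) :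
    (amF x1 φ y).det ≠ 0 := by
  intro h0
  obtain ⟨v, hv, hAv⟩ := (Matrix.exists_mulVec_eq_zero_iff).2 h0
  have key : ∫ t in x1..y, (∑ j, v j * φ j t)^2
      = ∑ j, ∑ k, v j * v k * ∫ t in x1..y, φ j t * φ k t := by
    have e1 : ∀ t, (∑ j, v j * φ j t)^2 = ∑ j, ∑ k, v j * v k * (φ j t * φ k t) := by
      intro t
      rw [sq, Finset.sum_mul_sum]
      exact Finset.sum_congr rfl fun j _ => Finset.sum_congr rfl fun k _ => by ring
    simp_rw [e1]
    rw [intervalIntegral.integral_finset_sum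
      (f := fun (j : Fin M) t => ∑ k, v j * v k * (φ j t * φ k t))
      (fun j _ => am_ii_sum _ (fun k _ => (hint j k).const_mul _))]
    refine Finset.sum_congr rfl fun j _ => ?_
    rw [intervalIntegral.integral_finset_sum
      (f := fun (k : Fin M) t => v j * v k * (φ j t * φ k t))
      (fun k _ => (hint j k).const_mul _)]
    exact Finset.sum_congr rfl fun k _ =>
      (intervalIntegral.integral_const_mul (v j * v k) (fun t => φ j t * φ k t))
  have h2 : v ⬝ᵥ ((amF x1 φ y) *ᵥ v)
      = (∑ j, v j ^ 2) + ∫ t in x1..y, (∑ j, v j * φ j t)^2 := by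
    rw [key]
    simp only [dotProduct, Matrix.mulVec, amF, Matrix.of_apply, Finset.mul_sum]
    rw [← Finset.sum_add_distrib]
    refine Finset.sum_congr rfl fun j _ => ?_
    have e2 : ∀ k : Fin M, v j * (((if j = k then (1:ℝ) else 0)
          + ∫ t in x1..y, φ j t * φ k t) * v k)
        = (if j = k then v j * v k else 0) + v j * v k * ∫ t in x1..y, φ j t * φ k t := by
      intro k; by_cases h : j = k <;> simp [h] <;> ring
    simp_rw [e2]
    rw [Finset.sum_add_distrib, Finset.sum_ite_eq]
    simp [sq]
  have h3 : v ⬝ᵥ ((amF x1 φ y) *ᵥ v) = 0 := by rw [hAv]; simp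
  have hpos : 0 < ∑ j, v j ^ 2 := by
    obtain ⟨j, hj⟩ := Function.ne_iff.1 hv
    exact Finset.sum_pos' (fun i _ => sq_nonneg _)
      ⟨j, Finset.mem_univ j, sq_pos_of_ne_zero hj⟩
  have hnn : 0 ≤ ∫ t in x1..y, (∑ j, v j * φ j t)^2 :=
    intervalIntegral.integral_nonneg hy (fun t _ => sq_nonneg _)
  rw [h2] at h3
  linarith

lemma am_det_diff {N : ℕ} (A : ℝ → Matrix (Fin N) (Fin N) ℝ) (x : ℝ)
    (h : ∀ i j, DifferentiableAt ℝ (fun y => A y i j) x) :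
    DifferentiableAt ℝ (fun y => (A y).det) x := by
  simp only [Matrix.det_apply]
  apply DifferentiableAt.fun_sum
  intro σ _
  simp only [Units.smul_def, zsmul_eq_mul]
  exact (differentiableAt_const _).mul
    (DifferentiableAt.fun_finsetProd (fun i _ => h (σ i) i))

lemma am_adj_diff {N : ℕ} (A : ℝ → Matrix (Fin N) (Fin N) ℝ) (x : ℝ)
    (h : ∀ i j, DifferentiableAt ℝ (fun y => A y i j) x) (i j : Fin N) :
    DifferentiableAt ℝ (fun y => (A y).adjugate i j) x := by
  simp only [Matrix.adjugate_apply]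
  apply am_det_diff
  intro p q
  rw [show (fun y => (A y).updateRow j (Pi.single i 1) p q)
      = fun y => if p = j then (Pi.single i (1:ℝ) : Fin N → ℝ) q else A y p q by
    funext y; rw [Matrix.updateRow_apply]]
  by_cases hp : p = j <;> simp [hp, h p q]

lemma am_inv_entry_diff {N : ℕ} (A : ℝ → Matrix (Fin N) (Fin N) ℝ) (x : ℝ)
    (h : ∀ i j, DifferentiableAt ℝ (fun y => A y i j) x)
    (hdet : (A x).det ≠ 0) (i j : Fin N) :
    DifferentiableAt ℝ (fun y => (A y)⁻¹ i j) x := by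
  have e : (fun y => (A y)⁻¹ i j) = fun y => ((A y).det)⁻¹ * (A y).adjugate i j := by
    funext y
    rw [Matrix.inv_def, Matrix.smul_apply, Ring.inverse_eq_inv', smul_eq_mul]
  rw [e]
  exact ((am_det_diff A x h).inv hdet).mul (am_adj_diff A x h i j)

lemma am_inv_entry_hasDerivAt {N : ℕ} (A : ℝ → Matrix (Fin N) (Fin N) ℝ)
    (A' : Matrix (Fin N) (Fin N) ℝ) (x : ℝ)
    (h : ∀ i j, HasDerivAt (fun y => A y i j) (A' i j) x)
    (hdet : ∀ᶠ y in nhds x, (A y).det ≠ 0) (i j : Fin N) :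
    HasDerivAt (fun y => (A y)⁻¹ i j)
      ((-((A x)⁻¹ * A' * (A x)⁻¹)) i j) x := by
  have hdx : (A x).det ≠ 0 := hdet.self_of_nhds
  have hdiff : ∀ i j, DifferentiableAt ℝ (fun y => (A y)⁻¹ i j) x :=
    am_inv_entry_diff A x (fun i j => (h i j).differentiableAt) hdx
  set B := (A x)⁻¹ with hB
  set D : Matrix (Fin N) (Fin N) ℝ :=
    Matrix.of fun i j => deriv (fun y => (A y)⁻¹ i j) x with hDdef
  have hD : ∀ i j, HasDerivAt (fun y => (A y)⁻¹ i j) (D i j) x :=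
    fun i j => (hdiff i j).hasDerivAt
  have heq : A' * B + A x * D = 0 := by
    ext i l
    have h1 : HasDerivAt (fun y => ∑ j, A y i j * (A y)⁻¹ j l)
        (∑ j, (A' i j * B j l + A x i j * D j l)) x :=
      HasDerivAt.fun_sum fun j _ => (h i j).mul (hD j l)
    have h2 : (fun y => ∑ j, A y i j * (A y)⁻¹ j l)
        =ᶠ[nhds x] fun _ => if i = l then (1:ℝ) else 0 := by
      filter_upwards [hdet] with y hy
      have hmul := Matrix.mul_nonsing_inv (A y) (isUnit_iff_ne_zero.2 hy)
      calc ∑ j, A y i j * (A y)⁻¹ j l = (A y * (A y)⁻¹) i l := by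
            rw [Matrix.mul_apply]
        _ = (1 : Matrix (Fin N) (Fin N) ℝ) i l := by rw [hmul]
        _ = if i = l then 1 else 0 := Matrix.one_apply
    have h3 : HasDerivAt (fun y => ∑ j, A y i j * (A y)⁻¹ j l) 0 x :=
      (hasDerivAt_const x _).congr_of_eventuallyEq h2
    have h4 := h1.unique h3
    simp only [Matrix.add_apply, Matrix.mul_apply, Matrix.zero_apply]
    rw [Finset.sum_add_distrib] at h4
    exact h4
  have hDval : D = -(B * A' * B) := by
    have h5 : A x * D = -(A' * B) := by
      rw [eq_neg_iff_add_eq_zero, add_comm]; exact heq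
    have h6 : B * (A x * D) = B * (-(A' * B)) := by rw [h5]
    rwa [← Matrix.mul_assoc, Matrix.nonsing_inv_mul (A x) (isUnit_iff_ne_zero.2 hdx),
      Matrix.one_mul, Matrix.mul_neg, ← Matrix.mul_assoc] at h6
  have := hD i j
  rwa [hDval] at this

theorem am_multi_product_identity (x1 x2 : ℝ) (M : ℕ) (φ : Fin M → ℝ → ℝ)
    (f g : ℝ → ℝ)
    (hφc : ∀ j, ContinuousOn (φ j) (Ioo x1 x2))
    (hf : ContinuousOn f (Ioo x1 x2))
    (hg : ContinuousOn g (Ioo x1 x2))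
    (hintφ : ∀ j k, ∀ x ∈ Ioo x1 x2,
      IntegrableOn (fun y => φ j y * φ k y) (Ioo x1 x))
    (hintf : ∀ j, ∀ x ∈ Ioo x1 x2,
      IntegrableOn (fun y => φ j y * f y) (Ioo x1 x))
    (hintg : ∀ j, ∀ x ∈ Ioo x1 x2,
      IntegrableOn (fun y => φ j y * g y) (Ioo x1 x)) :
    ∀ x ∈ Ioo x1 x2,
      HasDerivAt
        (fun y => ∑ k : Fin M, ∑ m : Fin M,
          (∫ t in x1..y, φ k t * f t) * (amF x1 φ y)⁻¹ k m *
            ∫ t in x1..y, φ m t * g t)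
        (f x * g x - amTransform x1 φ f x * amTransform x1 φ g x) x := by
  intro x hx
  set p : Fin M → ℝ := fun j => φ j x with hp
  set a : Fin M → ℝ := fun k => ∫ t in x1..x, φ k t * f t with ha_def
  set b : Fin M → ℝ := fun m => ∫ t in x1..x, φ m t * g t with hb_def
  set Bx : Matrix (Fin M) (Fin M) ℝ := (amF x1 φ x)⁻¹ with hBx
  set A' : Matrix (Fin M) (Fin M) ℝ := vecMulVec p p with hA'
  -- derivatives of the matrix entries
  have hA : ∀ j k, HasDerivAt (fun y => amF x1 φ y j k) (A' j k) x := by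
    intro j k
    have h1 : HasDerivAt (fun y => ∫ t in x1..y, φ j t * φ k t) (φ j x * φ k x) x :=
      am_ftc_helper _ ((hφc j).mul (hφc k)) (hintφ j k x hx) hx
    have h2 := h1.const_add (if j = k then (1:ℝ) else 0)
    simpa [amF, Matrix.vecMulVec_apply, hA', hp] using h2
  -- the determinant is nonzero near x
  have hdet : ∀ᶠ y in nhds x, (amF x1 φ y).det ≠ 0 := by
    filter_upwards [isOpen_Ioo.mem_nhds hx] with y hy
    exact amF_det_ne φ hy.1.le (fun j k =>
      (intervalIntegrable_iff_integrableOn_Ioo_of_le hy.1.le).2 (hintφ j k y hy))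
  have hdx : (amF x1 φ x).det ≠ 0 := hdet.self_of_nhds
  -- derivatives of the inverse entries
  have hBd : ∀ k m, HasDerivAt (fun y => (amF x1 φ y)⁻¹ k m)
      ((-(Bx * A' * Bx)) k m) x :=
    fun k m => am_inv_entry_hasDerivAt (amF x1 φ) A' x hA hdet k m
  -- derivatives of the moment integrals
  have haD : ∀ k, HasDerivAt (fun y => ∫ t in x1..y, φ k t * f t) (p k * f x) x :=
    fun k => am_ftc_helper _ ((hφc k).mul hf) (hintf k x hx) hx
  have hbD : ∀ m, HasDerivAt (fun y => ∫ t in x1..y, φ m t * g t) (p m * g x) x :=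
    fun m => am_ftc_helper _ ((hφc m).mul hg) (hintg m x hx) hx
  -- main derivative computation
  have hmain : HasDerivAt
      (fun y => ∑ k : Fin M, ∑ m : Fin M,
        (∫ t in x1..y, φ k t * f t) * (amF x1 φ y)⁻¹ k m *
          ∫ t in x1..y, φ m t * g t)
      (∑ k : Fin M, ∑ m : Fin M,
        ((p k * f x * Bx k m + a k * (-(Bx * A' * Bx)) k m) * b m
          + a k * Bx k m * (p m * g x))) x := by
    refine HasDerivAt.fun_sum fun k _ => HasDerivAt.fun_sum fun m _ => ?_
    exact ((haD k).mul (hBd k m)).mul (hbD m)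
  -- identify the derivative value
  have hBsym : Bxᵀ = Bx := by
    have hAsym : (amF x1 φ x)ᵀ = amF x1 φ x := by
      ext j k
      simp only [Matrix.transpose_apply, amF, Matrix.of_apply]
      congr 1
      · simp [eq_comm]
      · exact intervalIntegral.integral_congr fun t _ => mul_comm _ _
    rw [hBx, Matrix.transpose_nonsing_inv, hAsym]
  have hdotexp : ∀ (C : Matrix (Fin M) (Fin M) ℝ) (w z : Fin M → ℝ),
      w ⬝ᵥ (C *ᵥ z) = ∑ k, ∑ m, w k * C k m * z m := by
    intro C w z
    simp only [dotProduct, Matrix.mulVec, Finset.mul_sum]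
    exact Finset.sum_congr rfl fun k _ => Finset.sum_congr rfl fun m _ => by ring
  have hsymdot : a ⬝ᵥ (Bx *ᵥ p) = p ⬝ᵥ (Bx *ᵥ a) :=
    calc a ⬝ᵥ (Bx *ᵥ p) = (a ᵥ* Bx) ⬝ᵥ p := Matrix.dotProduct_mulVec a Bx p
      _ = (a ᵥ* Bxᵀ) ⬝ᵥ p := by rw [hBsym]
      _ = (Bx *ᵥ a) ⬝ᵥ p := by rw [Matrix.vecMul_transpose]
      _ = p ⬝ᵥ (Bx *ᵥ a) := dotProduct_comm _ _
  set U : ℝ := p ⬝ᵥ (Bx *ᵥ a) with hU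
  set V : ℝ := p ⬝ᵥ (Bx *ᵥ b) with hV
  have hA'mulVec : ∀ w : Fin M → ℝ, A' *ᵥ w = (p ⬝ᵥ w) • p := by
    intro w
    ext i
    simp only [hA', Matrix.mulVec, dotProduct, Matrix.vecMulVec_apply,
      Pi.smul_apply, smul_eq_mul, Finset.sum_mul]
    exact Finset.sum_congr rfl fun j _ => by ring
  -- the three pieces
  have hS1 : (∑ k : Fin M, ∑ m : Fin M, p k * f x * Bx k m * b m) = f x * V := by
    rw [hV, hdotexp, Finset.mul_sum]
    refine Finset.sum_congr rfl fun k _ => ?_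
    rw [Finset.mul_sum]
    exact Finset.sum_congr rfl fun m _ => by ring
  have hS3 : (∑ k : Fin M, ∑ m : Fin M, a k * Bx k m * (p m * g x)) = g x * U := by
    rw [← hsymdot, hdotexp, Finset.mul_sum]
    refine Finset.sum_congr rfl fun k _ => ?_
    rw [Finset.mul_sum]
    exact Finset.sum_congr rfl fun m _ => by ring
  have hS2 : (∑ k : Fin M, ∑ m : Fin M, a k * (-(Bx * A' * Bx)) k m * b m)
      = -(U * V) := by
    rw [← hdotexp]
    rw [Matrix.neg_mulVec, dotProduct_neg]
    rw [show (Bx * A' * Bx) *ᵥ b = Bx *ᵥ (A' *ᵥ (Bx *ᵥ b)) by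
      rw [Matrix.mulVec_mulVec, Matrix.mulVec_mulVec]]
    rw [hA'mulVec, Matrix.mulVec_smul, dotProduct_smul, smul_eq_mul, hsymdot]
    ring
  -- the transforms
  have hUval : amTransform x1 φ f x = f x - U := by
    rw [hU, hdotexp]
    simp only [amTransform, hp, hBx, ha_def]
  have hVval : amTransform x1 φ g x = g x - V := by
    rw [hV, hdotexp]
    simp only [amTransform, hp, hBx, hb_def]
  -- put everything together
  have hval : (∑ k : Fin M, ∑ m : Fin M,
        ((p k * f x * Bx k m + a k * (-(Bx * A' * Bx)) k m) * b m
          + a k * Bx k m * (p m * g x)))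
      = f x * g x - amTransform x1 φ f x * amTransform x1 φ g x := by
    have hsplit : (∑ k : Fin M, ∑ m : Fin M,
          ((p k * f x * Bx k m + a k * (-(Bx * A' * Bx)) k m) * b m
            + a k * Bx k m * (p m * g x)))
        = (∑ k : Fin M, ∑ m : Fin M, p k * f x * Bx k m * b m)
          + ((∑ k : Fin M, ∑ m : Fin M, a k * (-(Bx * A' * Bx)) k m * b m)
            + (∑ k : Fin M, ∑ m : Fin M, a k * Bx k m * (p m * g x))) := by
      simp only [← Finset.sum_add_distrib]
      exact Finset.sum_congr rfl fun k _ => Finset.sum_congr rfl fun m _ => by ring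
    rw [hsplit, hS1, hS2, hS3, hUval, hVval]
    ring
  exact hval ▸ hmain
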